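/- Let b ∈ (0,1). The function U_b : ℝ → ℝ defined by U_b(x) = (A e^{√2 x} − 1)/(A e^{√2 x} + 1) for x ≥ 0 and U_b(x) = b(B e^{−b√2 x} − 1)/(B e^{−b√2 x} + 1) for x < 0, where B = −(3b² + 1 + 2b√(2(b²+1)))/(1 − b²) and A = (B(1+b) + 1 − b)/(B(1−b) + 1 + b), satisfies: −U_b'' = U_b(1 − U_b²) on (0,∞), −U_b'' = U_b(b² − U_b²) on (−∞,0), U_b is C¹ on ℝ, U_b is strictly increasing, lim_{x→+∞} U_b(x) = 1, lim_{x→−∞} U_b(x) = b, and U_b(0) = √((b²+1)/2). -/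

import Mathlib

open Filter Topology Set

noncomputable def Fgl (A : ℝ) (x : ℝ) : ℝ :=
  (A * Real.exp (Real.sqrt 2 * x) - 1) / (A * Real.exp (Real.sqrt 2 * x) + 1)

noncomputable def Ggl (b B : ℝ) (x : ℝ) : ℝ :=
  b * (B * Real.exp (-(b * Real.sqrt 2 * x)) - 1) / (B * Real.exp (-(b * Real.sqrt 2 * x)) + 1)

noncomputable def dFgl (A : ℝ) (x : ℝ) : ℝ :=
  2 * Real.sqrt 2 * A * Real.exp (Real.sqrt 2 * x) / (A * Real.exp (Real.sqrt 2 * x) + 1) ^ 2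

noncomputable def dGgl (b B : ℝ) (x : ℝ) : ℝ :=
  -(2 * b ^ 2 * Real.sqrt 2 * B * Real.exp (-(b * Real.sqrt 2 * x)))
    / (B * Real.exp (-(b * Real.sqrt 2 * x)) + 1) ^ 2

lemma Fden_pos {A : ℝ} (hA : 0 < A) (x : ℝ) : 0 < A * Real.exp (Real.sqrt 2 * x) + 1 := by
  have := Real.exp_pos (Real.sqrt 2 * x); nlinarith

lemma hasDerivAt_Fgl {A : ℝ} (hA : 0 < A) (x : ℝ) : HasDerivAt (Fgl A) (dFgl A x) x := by
  have hlin : HasDerivAt (fun y : ℝ => Real.sqrt 2 * y) (Real.sqrt 2) x := by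
    simpa using (hasDerivAt_id x).const_mul (Real.sqrt 2)
  have hexp := hlin.exp
  have hnum : HasDerivAt (fun y : ℝ => A * Real.exp (Real.sqrt 2 * y) - 1)
      (A * (Real.exp (Real.sqrt 2 * x) * Real.sqrt 2)) x := (hexp.const_mul A).sub_const 1
  have hden : HasDerivAt (fun y : ℝ => A * Real.exp (Real.sqrt 2 * y) + 1)
      (A * (Real.exp (Real.sqrt 2 * x) * Real.sqrt 2)) x := (hexp.const_mul A).add_const 1
  have h := hnum.div hden (ne_of_gt (Fden_pos hA x))
  refine h.congr_deriv (Eq.symm ?_)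
  have h0 := ne_of_gt (Fden_pos hA x)
  unfold dFgl
  field_simp
  ring

lemma Fgl_ode {A : ℝ} (hA : 0 < A) (x : ℝ) :
    dFgl A x = Real.sqrt 2 / 2 * (1 - Fgl A x ^ 2) := by
  have h0 := ne_of_gt (Fden_pos hA x)
  unfold dFgl Fgl
  field_simp
  ring

lemma hasDerivAt_dFgl {A : ℝ} (hA : 0 < A) (x : ℝ) :
    HasDerivAt (dFgl A) (-(Fgl A x * (1 - Fgl A x ^ 2))) x := by
  have hfun : dFgl A = fun y => Real.sqrt 2 / 2 * (1 - Fgl A y ^ 2) :=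
    funext fun y => Fgl_ode hA y
  rw [hfun]
  have h1 : HasDerivAt (fun y => Fgl A y ^ 2) (2 * Fgl A x ^ 1 * dFgl A x) x :=
    (hasDerivAt_Fgl hA x).pow 2
  have h2 := (h1.const_sub 1).const_mul (Real.sqrt 2 / 2)
  refine h2.congr_deriv (Eq.symm ?_)
  rw [Fgl_ode hA x]
  have hs2 : Real.sqrt 2 ^ 2 = 2 := Real.sq_sqrt (by norm_num)
  linear_combination (Fgl A x * (1 - Fgl A x ^ 2) / 2) * hs2

lemma hasDerivAt_Ggl {b B : ℝ} (x : ℝ)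
    (h : B * Real.exp (-(b * Real.sqrt 2 * x)) + 1 ≠ 0) :
    HasDerivAt (Ggl b B) (dGgl b B x) x := by
  have hlin : HasDerivAt (fun y : ℝ => -(b * Real.sqrt 2 * y)) (-(b * Real.sqrt 2)) x := by
    exact ((hasDerivAt_id x).const_mul (b * Real.sqrt 2)).neg.congr_deriv (by ring)
  have hexp := hlin.exp
  have hnum : HasDerivAt (fun y : ℝ => b * (B * Real.exp (-(b * Real.sqrt 2 * y)) - 1))
      (b * (B * (Real.exp (-(b * Real.sqrt 2 * x)) * -(b * Real.sqrt 2)))) x :=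
    (((hexp.const_mul B).sub_const 1).const_mul b)
  have hden : HasDerivAt (fun y : ℝ => B * Real.exp (-(b * Real.sqrt 2 * y)) + 1)
      (B * (Real.exp (-(b * Real.sqrt 2 * x)) * -(b * Real.sqrt 2))) x :=
    (hexp.const_mul B).add_const 1
  have hd := hnum.div hden h
  refine hd.congr_deriv (Eq.symm ?_)
  unfold dGgl
  field_simp
  ring

lemma Ggl_ode {b B : ℝ} (x : ℝ)
    (h : B * Real.exp (-(b * Real.sqrt 2 * x)) + 1 ≠ 0) :
    dGgl b B x = Real.sqrt 2 / 2 * (Ggl b B x ^ 2 - b ^ 2) := by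
  unfold dGgl Ggl
  field_simp
  ring

lemma hasDerivAt_dGgl {b B : ℝ} (x : ℝ)
    (h : B * Real.exp (-(b * Real.sqrt 2 * x)) + 1 ≠ 0) :
    HasDerivAt (dGgl b B) (-(Ggl b B x * (b ^ 2 - Ggl b B x ^ 2))) x := by
  have hcont : Continuous fun y : ℝ => B * Real.exp (-(b * Real.sqrt 2 * y)) + 1 := by
    continuity
  have hnhds : ∀ᶠ y in 𝓝 x, B * Real.exp (-(b * Real.sqrt 2 * y)) + 1 ≠ 0 :=
    hcont.continuousAt.eventually_ne h
  have heq : (fun y => Real.sqrt 2 / 2 * (Ggl b B y ^ 2 - b ^ 2)) =ᶠ[𝓝 x] dGgl b B :=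
    hnhds.mono fun y hy => (Ggl_ode y hy).symm
  have h1 : HasDerivAt (fun y => Ggl b B y ^ 2) (2 * Ggl b B x ^ 1 * dGgl b B x) x :=
    (hasDerivAt_Ggl x h).pow 2
  have h2 := (h1.sub_const (b ^ 2)).const_mul (Real.sqrt 2 / 2)
  have h3 := h2.congr_of_eventuallyEq heq.symm
  refine h3.congr_deriv (Eq.symm ?_)
  rw [Ggl_ode x h]
  have hs2 : Real.sqrt 2 ^ 2 = 2 := Real.sq_sqrt (by norm_num)
  linear_combination (-(Ggl b B x * (Ggl b B x ^ 2 - b ^ 2)) / 2) * hs2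

lemma continuous_dFgl {A : ℝ} (hA : 0 < A) : Continuous (dFgl A) := by
  unfold dFgl
  apply Continuous.div (by fun_prop) (by fun_prop)
  exact fun x => pow_ne_zero 2 (ne_of_gt (Fden_pos hA x))

lemma continuousAt_dGgl {b B : ℝ} {x : ℝ}
    (h : B * Real.exp (-(b * Real.sqrt 2 * x)) + 1 ≠ 0) :
    ContinuousAt (dGgl b B) x := by
  unfold dGgl
  apply ContinuousAt.div (by fun_prop) (by fun_prop)
  exact pow_ne_zero 2 h

set_option maxHeartbeats 1600000 in
theorem stmt3 (b : ℝ) (hb : b ∈ Set.Ioo (0:ℝ) 1) :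
    let B : ℝ := -(3 * b ^ 2 + 1 + 2 * b * Real.sqrt (2 * (b ^ 2 + 1))) / (1 - b ^ 2)
    let A : ℝ := (B * (1 + b) + 1 - b) / (B * (1 - b) + 1 + b)
    let U : ℝ → ℝ := fun x =>
      if 0 ≤ x then (A * Real.exp (Real.sqrt 2 * x) - 1) / (A * Real.exp (Real.sqrt 2 * x) + 1)
      else b * (B * Real.exp (-(b * Real.sqrt 2 * x)) - 1) / (B * Real.exp (-(b * Real.sqrt 2 * x)) + 1)
    (∀ x ∈ Set.Ioi (0:ℝ), deriv (deriv U) x = -(U x * (1 - U x ^ 2))) ∧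
    (∀ x ∈ Set.Iio (0:ℝ), deriv (deriv U) x = -(U x * (b ^ 2 - U x ^ 2))) ∧
    ContDiff ℝ 1 U ∧
    StrictMono U ∧
    Tendsto U atTop (𝓝 1) ∧
    Tendsto U atBot (𝓝 b) ∧
    U 0 = Real.sqrt ((b ^ 2 + 1) / 2) := by
  obtain ⟨hb0, hb1⟩ := hb
  intro B A U
  have hBdef : B = -(3 * b ^ 2 + 1 + 2 * b * Real.sqrt (2 * (b ^ 2 + 1))) / (1 - b ^ 2) := rfl
  have hAdef : A = (B * (1 + b) + 1 - b) / (B * (1 - b) + 1 + b) := rfl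
  have hUdef : ∀ x, U x = if 0 ≤ x then Fgl A x else Ggl b B x := fun x => by
    unfold Fgl Ggl; rfl
  clear_value B A U
  have h1b : (1:ℝ) - b ^ 2 ≠ 0 := by nlinarith
  have hb2 : b ^ 2 < 1 := by nlinarith
  have hs0 : (0:ℝ) < Real.sqrt 2 := Real.sqrt_pos.mpr (by norm_num)
  have hs2 : Real.sqrt 2 ^ 2 = 2 := Real.sq_sqrt (by norm_num)
  set R := Real.sqrt (2 * (b ^ 2 + 1)) with hRdef
  have hR0 : 0 < R := Real.sqrt_pos.mpr (by nlinarith)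
  have hR2 : R ^ 2 = 2 * (b ^ 2 + 1) := Real.sq_sqrt (by nlinarith)
  set c := Real.sqrt ((b ^ 2 + 1) / 2) with hcdef
  have hc0 : 0 < c := Real.sqrt_pos.mpr (by nlinarith)
  have hc2 : c ^ 2 = (b ^ 2 + 1) / 2 := Real.sq_sqrt (by nlinarith)
  have hRc : R = 2 * c := by
    rw [hRdef, hcdef, show 2 * (b ^ 2 + 1) = ((b ^ 2 + 1) / 2) * 2 ^ 2 by ring,
      Real.sqrt_mul (by positivity), Real.sqrt_sq (by norm_num)]
    ring
  have hbR : 0 < b * R := mul_pos hb0 hR0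
  have hB1 : B < -1 := by
    rw [hBdef, div_lt_iff₀ (by nlinarith : (0:ℝ) < 1 - b ^ 2)]
    nlinarith
  have hR1 : 1 < R := by nlinarith
  have hBden : B * (1 - b) + 1 + b < 0 := by
    have heq : B * (1 - b) + 1 + b
        = ((1 - b) * ((1 + b) ^ 2 - (3 * b ^ 2 + 1 + 2 * b * R))) / (1 - b ^ 2) := by
      rw [hBdef]
      field_simp [h1b]
      ring
    rw [heq]
    apply div_neg_of_neg_of_pos
    · nlinarith
    · nlinarith
  have hB1' : B + 1 < 0 := by linarith
  have hBm1 : B - 1 < 0 := by linarith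
  have hdenne : B * (1 - b) + 1 + b ≠ 0 := ne_of_lt hBden
  have hB1ne : B + 1 ≠ 0 := ne_of_lt hB1'
  have hA1 : A - 1 = 2 * b * (B - 1) / (B * (1 - b) + 1 + b) := by
    rw [hAdef]; field_simp [hdenne]; ring
  have hA2 : A + 1 = 2 * (B + 1) / (B * (1 - b) + 1 + b) := by
    rw [hAdef]; field_simp [hdenne]; ring
  have hAgt1 : 1 < A := by
    have h : 0 < A - 1 := by
      rw [hA1]
      exact div_pos_of_neg_of_neg (by nlinarith) hBden
    linarith
  have hA0 : 0 < A := by linarith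
  have hkey : b * (B - 1) = c * (B + 1) := by
    rw [hBdef, hRc]
    field_simp [h1b]
    linear_combination (4 * b) * hc2
  have hc_eq : b * (B - 1) / (B + 1) = c := by
    rw [div_eq_iff hB1ne]; linear_combination hkey
  have hA_eq : (A - 1) / (A + 1) = c := by
    rw [hA1, hA2, ← hc_eq]
    rw [div_div_div_comm, div_self hdenne, div_one]
    field_simp [hB1ne]
  have hF0 : Fgl A 0 = c := by
    have h : Fgl A 0 = (A - 1) / (A + 1) := by simp [Fgl]
    rw [h, hA_eq]
  have hG0 : Ggl b B 0 = c := by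
    have h : Ggl b B 0 = b * (B - 1) / (B + 1) := by simp [Ggl]
    rw [h, hc_eq]
  have hGden : ∀ x : ℝ, x ≤ 0 → B * Real.exp (-(b * Real.sqrt 2 * x)) + 1 < 0 := by
    intro x hx
    have h1 : 1 ≤ Real.exp (-(b * Real.sqrt 2 * x)) := by
      have h2 : (0:ℝ) ≤ -(b * Real.sqrt 2 * x) := by
        have h4 := mul_nonneg (mul_pos hb0 hs0).le (neg_nonneg.mpr hx)
        linarith [h4]
      exact Real.one_le_exp h2
    have h3 : B * Real.exp (-(b * Real.sqrt 2 * x)) ≤ B * 1 :=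
      mul_le_mul_of_nonpos_left h1 (by linarith : B ≤ 0)
    linarith
  have hGden' : ∀ x : ℝ, x ≤ 0 → B * Real.exp (-(b * Real.sqrt 2 * x)) + 1 ≠ 0 :=
    fun x hx => ne_of_lt (hGden x hx)
  have hUF : ∀ x : ℝ, 0 ≤ x → U x = Fgl A x := fun x hx => by rw [hUdef, if_pos hx]
  have hUG : ∀ x : ℝ, x ≤ 0 → U x = Ggl b B x := by
    intro x hx
    rcases lt_or_eq_of_le hx with h | h
    · rw [hUdef, if_neg (not_le.mpr h)]
    · rw [h, hUF 0 le_rfl, hF0, hG0]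
  have hd0 : dFgl A 0 = dGgl b B 0 := by
    rw [Fgl_ode hA0 0, Ggl_ode 0 (hGden' 0 le_rfl), hF0, hG0]
    linear_combination (-Real.sqrt 2) * hc2
  have hUderiv : ∀ x : ℝ, HasDerivAt U (if 0 ≤ x then dFgl A x else dGgl b B x) x := by
    intro x
    rcases lt_trichotomy x 0 with hx | hx | hx
    · rw [if_neg (not_le.mpr hx)]
      apply (hasDerivAt_Ggl x (hGden' x hx.le)).congr_of_eventuallyEq
      filter_upwards [Iio_mem_nhds hx] with y hy
      exact hUG y (le_of_lt hy)
    · subst hx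
      rw [if_pos le_rfl]
      have h1 : HasDerivWithinAt U (dFgl A 0) (Set.Ici 0) 0 :=
        ((hasDerivAt_Fgl hA0 0).hasDerivWithinAt).congr (fun y hy => hUF y hy) (hUF 0 le_rfl)
      have h2 : HasDerivWithinAt U (dFgl A 0) (Set.Iic 0) 0 := by
        rw [hd0]
        exact ((hasDerivAt_Ggl 0 (hGden' 0 le_rfl)).hasDerivWithinAt).congr
          (fun y hy => hUG y hy) (hUG 0 le_rfl)
      have h3 := h2.union h1
      rwa [Set.Iic_union_Ici, hasDerivWithinAt_univ] at h3
    · rw [if_pos hx.le]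
      apply (hasDerivAt_Fgl hA0 x).congr_of_eventuallyEq
      filter_upwards [Ioi_mem_nhds hx] with y hy
      exact hUF y (le_of_lt hy)
  have hdiff : Differentiable ℝ U := fun x => (hUderiv x).differentiableAt
  have hderivU : deriv U = fun x => if 0 ≤ x then dFgl A x else dGgl b B x :=
    funext fun x => (hUderiv x).deriv
  refine ⟨?_, ?_, ?_, ?_, ?_, ?_, ?_⟩
  · -- ODE on (0, ∞)
    intro x hx
    have hx' : (0:ℝ) < x := hx
    have hev : deriv U =ᶠ[𝓝 x] dFgl A := by
      rw [hderivU]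
      filter_upwards [Ioi_mem_nhds hx'] with y hy
      exact if_pos (le_of_lt hy)
    rw [hev.deriv_eq, (hasDerivAt_dFgl hA0 x).deriv, hUF x hx'.le]
  · -- ODE on (-∞, 0)
    intro x hx
    have hx' : x < 0 := hx
    have hev : deriv U =ᶠ[𝓝 x] dGgl b B := by
      rw [hderivU]
      filter_upwards [Iio_mem_nhds hx'] with y hy
      exact if_neg (not_le.mpr hy)
    rw [hev.deriv_eq, (hasDerivAt_dGgl x (hGden' x hx'.le)).deriv, hUG x hx'.le]
  · -- C¹
    rw [contDiff_one_iff_deriv]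
    refine ⟨hdiff, ?_⟩
    rw [hderivU]
    have hcontdF : Continuous (dFgl A) := continuous_dFgl hA0
    have hcontdG : ∀ x : ℝ, x ≤ 0 → ContinuousAt (dGgl b B) x :=
      fun x hx => continuousAt_dGgl (hGden' x hx)
    rw [continuous_iff_continuousAt]
    intro x
    rcases lt_trichotomy x 0 with hx | hx | hx
    · have hev : (fun y => if 0 ≤ y then dFgl A y else dGgl b B y) =ᶠ[𝓝 x] dGgl b B := by
        filter_upwards [Iio_mem_nhds hx] with y hy
        exact if_neg (not_le.mpr hy)
      rw [continuousAt_congr hev]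
      exact hcontdG x hx.le
    · subst hx
      have h1 : ContinuousWithinAt (fun y => if 0 ≤ y then dFgl A y else dGgl b B y)
          (Set.Ici 0) 0 :=
        (hcontdF.continuousAt.continuousWithinAt).congr
          (fun y hy => if_pos (Set.mem_Ici.mp hy)) (if_pos le_rfl)
      have h2 : ContinuousWithinAt (fun y => if 0 ≤ y then dFgl A y else dGgl b B y)
          (Set.Iic 0) 0 := by
        apply ((hcontdG 0 le_rfl).continuousWithinAt).congr
        · intro y hy
          rcases lt_or_eq_of_le (Set.mem_Iic.mp hy) with h | h
          · exact if_neg (not_le.mpr h)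
          · rw [h, if_pos le_rfl, hd0]
        · rw [if_pos le_rfl, hd0]
      have h3 := h2.union h1
      rwa [Set.Iic_union_Ici, continuousWithinAt_univ] at h3
    · have hev : (fun y => if 0 ≤ y then dFgl A y else dGgl b B y) =ᶠ[𝓝 x] dFgl A := by
        filter_upwards [Ioi_mem_nhds hx] with y hy
        exact if_pos (le_of_lt hy)
      rw [continuousAt_congr hev]
      exact hcontdF.continuousAt
  · -- StrictMono
    apply strictMono_of_deriv_pos
    intro x
    rw [hderivU]
    dsimp only
    split_ifs with hx
    · unfold dFgl
      apply div_pos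
      · exact mul_pos (mul_pos (mul_pos two_pos hs0) hA0) (Real.exp_pos _)
      · exact pow_pos (Fden_pos hA0 x) 2
    · unfold dGgl
      apply div_pos
      · have h7 : (0:ℝ) < 2 * b ^ 2 * Real.sqrt 2 * (-B) * Real.exp (-(b * Real.sqrt 2 * x)) :=
          mul_pos (mul_pos (mul_pos (mul_pos two_pos (pow_pos hb0 2)) hs0)
            (neg_pos.mpr (by linarith : B < 0))) (Real.exp_pos _)
        calc (0:ℝ) < 2 * b ^ 2 * Real.sqrt 2 * (-B) * Real.exp (-(b * Real.sqrt 2 * x)) := h7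
          _ = -(2 * b ^ 2 * Real.sqrt 2 * B * Real.exp (-(b * Real.sqrt 2 * x))) := by ring
      · exact pow_two_pos_of_ne_zero (hGden' x (le_of_lt (not_le.mp hx)))
  · -- limit at +∞
    have hE : Tendsto (fun x => A * Real.exp (Real.sqrt 2 * x)) atTop atTop :=
      Tendsto.const_mul_atTop hA0
        (Real.tendsto_exp_atTop.comp (Tendsto.const_mul_atTop hs0 tendsto_id))
    have hd := tendsto_atTop_add_const_right atTop (1:ℝ) hE
    have h2 : Tendsto (fun x => 1 - 2 * (A * Real.exp (Real.sqrt 2 * x) + 1)⁻¹)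
        atTop (𝓝 (1 - 2 * 0)) :=
      tendsto_const_nhds.sub (tendsto_const_nhds.mul hd.inv_tendsto_atTop)
    have h3 : Tendsto (Fgl A) atTop (𝓝 1) := by
      norm_num at h2
      apply h2.congr
      intro x
      have h0 := ne_of_gt (Fden_pos hA0 x)
      unfold Fgl
      field_simp
      ring
    apply h3.congr'
    filter_upwards [eventually_ge_atTop (0:ℝ)] with x hx
    exact (hUF x hx).symm
  · -- limit at -∞
    have hEexp : Tendsto (fun x => Real.exp (-(b * Real.sqrt 2 * x))) atBot atTop := by
      apply Real.tendsto_exp_atTop.comp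
      have h5 := Tendsto.const_mul_atBot (mul_pos hb0 hs0) (tendsto_id (x := (atBot : Filter ℝ)))
      exact (tendsto_neg_atBot_atTop).comp h5
    have hEB : Tendsto (fun x => B * Real.exp (-(b * Real.sqrt 2 * x))) atBot atBot :=
      (tendsto_const_mul_atBot_of_neg (by linarith : B < 0)).mpr hEexp
    have hd := tendsto_atBot_add_const_right atBot (1:ℝ) hEB
    have hdneg : Tendsto (fun x => -(B * Real.exp (-(b * Real.sqrt 2 * x)) + 1)) atBot atTop :=
      tendsto_neg_atBot_atTop.comp hd
    have h2 : Tendsto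
        (fun x => b + 2 * b * (-(B * Real.exp (-(b * Real.sqrt 2 * x)) + 1))⁻¹)
        atBot (𝓝 (b + 2 * b * 0)) :=
      tendsto_const_nhds.add (tendsto_const_nhds.mul hdneg.inv_tendsto_atTop)
    have h3 : Tendsto (Ggl b B) atBot (𝓝 b) := by
      rw [show b + 2 * b * 0 = b by ring] at h2
      apply h2.congr'
      filter_upwards [eventually_le_atBot (0:ℝ)] with x hx
      have h0 := hGden' x hx
      unfold Ggl
      rw [← neg_inv]
      field_simp [h0]
      ring
    apply h3.congr'
    filter_upwards [eventually_le_atBot (0:ℝ)] with x hx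
    exact (hUG x hx).symm
  · rw [hUF 0 le_rfl, hF0]
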